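/- Under the Lanchester supply model with constant fire allocation $p \in [0,1]^{2n}$, $\sum p_k = 1$, the cumulative Blue firepower $X(t) = \int_0^t B(s)\,ds$ satisfies the autonomous second-order ODE $X''(t) = -C_1 X(t)^2 + C_2 X(t) - C_3$, where $C_1 = \sum_{i=1}^n p_i p_{n+i} r_{R^i} r_{A^i} (\alpha_c^i - \alpha_d^i)/A_0^i$, $C_2 = \sum_{i=1}^n [p_{n+i} r_{A^i} (\alpha_c^i - \alpha_d^i) R_0^i + p_i r_{R^i} \alpha_c^i A_0^i]/A_0^i$, and $C_3 = \sum_{i=1}^n \alpha_c^i R_0^i$. -/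

import Mathlib

/-- Under the Lanchester supply model with constant allocation, the cumulative
firepower `X` satisfies `X'' = -C₁ X² + C₂ X - C₃` with the stated constants. -/
theorem stmt_6 (n : ℕ) (hn : 1 ≤ n)
    (B : ℝ → ℝ) (R A : Fin n → ℝ → ℝ)
    (p : Fin (n + n) → ℝ) (hp0 : ∀ k, 0 ≤ p k ∧ p k ≤ 1) (hp1 : (∑ k, p k) = 1)
    (rR rA αc αd R₀ A₀ : Fin n → ℝ)
    (hrR : ∀ i, 0 ≤ rR i) (hrA : ∀ i, 0 ≤ rA i)
    (hαd : ∀ i, 0 ≤ αd i) (hα : ∀ i, αd i ≤ αc i) (hA₀ : ∀ i, 0 < A₀ i)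
    (hBcont : Continuous B)
    (hB : ∀ t, HasDerivAt B
      (-(∑ i, (αd i + (αc i - αd i) * A i t / A₀ i) * R i t)) t)
    (hR : ∀ i, ∀ t, HasDerivAt (R i) (-(p (Fin.castAdd n i) * rR i * B t)) t)
    (hA : ∀ j, ∀ t, HasDerivAt (A j) (-(p (Fin.natAdd n j) * rA j * B t)) t)
    (hR0 : ∀ i, R i 0 = R₀ i) (hA0 : ∀ j, A j 0 = A₀ j)
    (X : ℝ → ℝ) (hX : ∀ t, X t = ∫ s in (0:ℝ)..t, B s)
    (C₁ C₂ C₃ : ℝ)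
    (hC₁ : C₁ = ∑ i, p (Fin.castAdd n i) * p (Fin.natAdd n i) * rR i * rA i
      * (αc i - αd i) / A₀ i)
    (hC₂ : C₂ = ∑ i, (p (Fin.natAdd n i) * rA i * (αc i - αd i) * R₀ i
      + p (Fin.castAdd n i) * rR i * αc i * A₀ i) / A₀ i)
    (hC₃ : C₃ = ∑ i, αc i * R₀ i) :
    ∀ t : ℝ, 0 ≤ t →
      HasDerivAt X (B t) t ∧
      HasDerivAt B (-C₁ * (X t) ^ 2 + C₂ * X t - C₃) t := by
  have hX0 : X 0 = 0 := by rw [hX]; simp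
  have hX' : ∀ t, HasDerivAt X (B t) t := by
    intro t
    have h : HasDerivAt (fun u => ∫ s in (0:ℝ)..u, B s) (B t) t :=
      intervalIntegral.integral_hasDerivAt_right (hBcont.intervalIntegrable 0 t)
        (hBcont.stronglyMeasurableAtFilter _ _) hBcont.continuousAt
    exact h.congr_of_eventuallyEq (Filter.Eventually.of_forall fun u => hX u)
  have key : ∀ (f : ℝ → ℝ) (c v : ℝ), (∀ u, HasDerivAt f (-(c * B u)) u) → f 0 = v →
      ∀ t, f t = v - c * X t := by
    intro f c v hf h0 t
    have hg : ∀ u, HasDerivAt (fun u => f u + c * X u) 0 u := by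
      intro u
      have := (hf u).add ((hX' u).const_mul c)
      simp at this
      exact this
    have hconst : f t + c * X t = f 0 + c * X 0 :=
      is_const_of_deriv_eq_zero (fun u => (hg u).differentiableAt)
        (fun u => (hg u).deriv) t 0
    rw [h0, hX0] at hconst
    linarith
  intro t ht
  refine ⟨hX' t, ?_⟩
  have hRt : ∀ i, R i t = R₀ i - p (Fin.castAdd n i) * rR i * X t :=
    fun i => key (R i) _ _ (hR i) (hR0 i) t
  have hAt : ∀ i, A i t = A₀ i - p (Fin.natAdd n i) * rA i * X t :=
    fun i => key (A i) _ _ (hA i) (hA0 i) t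
  have heq : -(∑ i, (αd i + (αc i - αd i) * A i t / A₀ i) * R i t)
      = -C₁ * (X t) ^ 2 + C₂ * X t - C₃ := by
    rw [hC₁, hC₂, hC₃]
    have hterm : ∀ i : Fin n, (αd i + (αc i - αd i) * A i t / A₀ i) * R i t
        = (p (Fin.castAdd n i) * p (Fin.natAdd n i) * rR i * rA i
            * (αc i - αd i) / A₀ i) * (X t) ^ 2
          - ((p (Fin.natAdd n i) * rA i * (αc i - αd i) * R₀ i
            + p (Fin.castAdd n i) * rR i * αc i * A₀ i) / A₀ i) * X t
          + αc i * R₀ i := by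
      intro i
      rw [hRt i, hAt i]
      have hne := (hA₀ i).ne'
      field_simp
      ring
    rw [Finset.sum_congr rfl fun i _ => hterm i]
    rw [Finset.sum_add_distrib, Finset.sum_sub_distrib, ← Finset.sum_mul, ← Finset.sum_mul]
    ring
  rw [← heq]
  exact hB t
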